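/- Let λ ∈ (0,∞). Let a° be an admissible policy minimizing E_P[exp(−G(a))] over admissible policies, with 0 < E_P[exp(−G(a°))] < ∞, and define Q* by dQ*/dP = exp(−G(a°)) / E_P[exp(−G(a°))]. For a bounded 𝓕_m-measurable payoff Z define the Deep Hedging values g_λ(Z) := sup over admissible a of U_λ(Z + G(a)), g_λ := g_λ(0), and g*_λ(Z) := sup over admissible a of U^{Q*}_λ(Z + G(a)). Then g*_λ(Z) ≤ g_λ(Z) − g_λ, with equality when the spreads are identically zero. -/

import Mathlib

open MeasureTheory ENNReal Real Filter Set

noncomputable section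

variable {Ω : Type*}

/-- Entropic utility `U_l(X) = -(1/l) * log E[exp (-l * X)]`, valued in `EReal`
(so that it takes values in `[-∞, ∞)` when `l > 0`). -/
def entU {mΩ : MeasurableSpace Ω} (P : Measure Ω) (l : ℝ) (X : Ω → ℝ) : EReal :=
  (- ENNReal.log (∫⁻ ω, ENNReal.ofReal (Real.exp (-l * X ω)) ∂P)) * ((1 / l : ℝ) : EReal)

/-- A policy: at each time `t < m`, an `F t`-measurable, essentially bounded action in `ℝ^n`. -/
def IsPolicy {mΩ : MeasurableSpace Ω} (P : Measure Ω) (m n : ℕ) (F : ℕ → MeasurableSpace Ω)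
    (a : ℕ → Ω → Fin n → ℝ) : Prop :=
  ∀ t < m, Measurable[F t] (a t) ∧ ∃ C : ℝ, ∀ᵐ ω ∂P, ∀ i, |a t ω i| ≤ C

/-- Terminal gain of a policy under proportional transaction costs:
`G(a) = Σ_{t<m} [ a_t · (H_T^{(t)} - H_t^{(t)}) - γ_t^+ · a_t^+ - γ_t^- · a_t^- ]`. -/
def propGain (m n : ℕ) (Hmid HT : ℕ → Ω → Fin n → ℝ) (γp γm : ℕ → Ω → Fin n → ℝ)
    (a : ℕ → Ω → Fin n → ℝ) (ω : Ω) : ℝ :=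
  ∑ t ∈ Finset.range m, ((∑ i, a t ω i * (HT t ω i - Hmid t ω i))
    - ∑ i, (γp t ω i * max (a t ω i) 0 + γm t ω i * max (-a t ω i) 0))

/-! ### Auxiliary lemmas -/

lemma ereal_neg_coe_add (r : ℝ) (y : EReal) : -((r : EReal) + y) = ((-r : ℝ) : EReal) + (-y) := by
  induction y using EReal.rec with
  | bot => simp
  | coe s => norm_cast; ring
  | top => simp

lemma ereal_coe_add_mul (r : ℝ) (y : EReal) (s : ℝ) (hs : 0 < s) :
    ((r : EReal) + y) * (s : EReal) = ((r * s : ℝ) : EReal) + y * (s : EReal) := by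
  induction y using EReal.rec with
  | bot =>
      rw [EReal.add_bot, EReal.bot_mul_coe_of_pos hs, EReal.add_bot]
  | coe t => norm_cast; ring
  | top =>
      rw [EReal.add_top_of_ne_bot (by simp), EReal.top_mul_coe_of_pos hs,
        EReal.add_top_of_ne_bot (EReal.coe_ne_bot _)]

lemma propGain_smul (m n : ℕ) (Hmid HT γp γm : ℕ → Ω → Fin n → ℝ)
    (a : ℕ → Ω → Fin n → ℝ) (r : ℝ) (hr : 0 ≤ r) (ω : Ω) :
    propGain m n Hmid HT γp γm (fun t ω i => r * a t ω i) ω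
      = r * propGain m n Hmid HT γp γm a ω := by
  unfold propGain
  rw [Finset.mul_sum]
  refine Finset.sum_congr rfl fun t _ => ?_
  have hmax : ∀ x : ℝ, max (r * x) 0 = r * max x 0 := fun x => by
    rw [mul_max_of_nonneg x 0 hr, mul_zero]
  rw [mul_sub, Finset.mul_sum, Finset.mul_sum]
  congr 1
  · exact Finset.sum_congr rfl fun i _ => by ring
  · refine Finset.sum_congr rfl fun i _ => ?_
    rw [hmax, show -(r * a t ω i) = r * (-a t ω i) by ring, hmax]
    ring

lemma propGain_superadd (m n : ℕ) (Hmid HT γp γm : ℕ → Ω → Fin n → ℝ)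
    (hγp : ∀ t ω i, 0 ≤ γp t ω i) (hγm : ∀ t ω i, 0 ≤ γm t ω i)
    (a b : ℕ → Ω → Fin n → ℝ) (ω : Ω) :
    propGain m n Hmid HT γp γm a ω + propGain m n Hmid HT γp γm b ω
      ≤ propGain m n Hmid HT γp γm (fun t ω i => a t ω i + b t ω i) ω := by
  unfold propGain
  rw [← Finset.sum_add_distrib]
  refine Finset.sum_le_sum fun t _ => ?_
  have hlin : (∑ i, (a t ω i + b t ω i) * (HT t ω i - Hmid t ω i))
      = (∑ i, a t ω i * (HT t ω i - Hmid t ω i)) + ∑ i, b t ω i * (HT t ω i - Hmid t ω i) := by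
    rw [← Finset.sum_add_distrib]; exact Finset.sum_congr rfl fun i _ => by ring
  have hcost : (∑ i, (γp t ω i * max (a t ω i + b t ω i) 0
        + γm t ω i * max (-(a t ω i + b t ω i)) 0))
      ≤ (∑ i, (γp t ω i * max (a t ω i) 0 + γm t ω i * max (-a t ω i) 0))
        + ∑ i, (γp t ω i * max (b t ω i) 0 + γm t ω i * max (-b t ω i) 0) := by
    rw [← Finset.sum_add_distrib]
    refine Finset.sum_le_sum fun i _ => ?_
    have h1 : max (a t ω i + b t ω i) 0 ≤ max (a t ω i) 0 + max (b t ω i) 0 :=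
      max_le (add_le_add (le_max_left _ _) (le_max_left _ _)) (by positivity)
    have h2 : max (-(a t ω i + b t ω i)) 0 ≤ max (-a t ω i) 0 + max (-b t ω i) 0 := by
      rw [neg_add]
      exact max_le (add_le_add (le_max_left _ _) (le_max_left _ _)) (by positivity)
    nlinarith [mul_le_mul_of_nonneg_left h1 (hγp t ω i), mul_le_mul_of_nonneg_left h2 (hγm t ω i)]
  linarith

lemma propGain_add_zero_cost (m n : ℕ) (Hmid HT γp γm : ℕ → Ω → Fin n → ℝ)
    (h0 : ∀ t < m, ∀ ω i, γp t ω i = 0 ∧ γm t ω i = 0)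
    (a b : ℕ → Ω → Fin n → ℝ) (ω : Ω) :
    propGain m n Hmid HT γp γm (fun t ω i => a t ω i + b t ω i) ω
      = propGain m n Hmid HT γp γm a ω + propGain m n Hmid HT γp γm b ω := by
  unfold propGain
  rw [← Finset.sum_add_distrib]
  refine Finset.sum_congr rfl fun t ht => ?_
  have ht' := Finset.mem_range.mp ht
  have hz : ∀ c : ℕ → Ω → Fin n → ℝ,
      (∑ i, (γp t ω i * max (c t ω i) 0 + γm t ω i * max (-c t ω i) 0)) = 0 := fun c => by
    refine Finset.sum_eq_zero fun i _ => ?_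
    rw [(h0 t ht' ω i).1, (h0 t ht' ω i).2]; ring
  rw [hz a, hz b, hz (fun t ω i => a t ω i + b t ω i)]
  simp only [sub_zero]
  rw [← Finset.sum_add_distrib]
  exact Finset.sum_congr rfl fun i _ => by ring

lemma entU_mono {mΩ : MeasurableSpace Ω} (P : Measure Ω) (l : ℝ) (hl : 0 < l)
    {X Y : Ω → ℝ} (h : ∀ᵐ ω ∂P, X ω ≤ Y ω) : entU P l X ≤ entU P l Y := by
  unfold entU
  refine mul_le_mul_of_nonneg_right ?_ (EReal.coe_nonneg.mpr (by positivity))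
  refine EReal.neg_le_neg_iff.mpr (ENNReal.log_monotone (lintegral_mono_ae ?_))
  filter_upwards [h] with ω hω
  exact ENNReal.ofReal_le_ofReal (Real.exp_le_exp.mpr (by nlinarith))

lemma meas_smul {n : ℕ} {mΩ' : MeasurableSpace Ω} {f : Ω → Fin n → ℝ} (hf : Measurable f)
    (r : ℝ) : Measurable fun ω i => r * f ω i :=
  measurable_pi_lambda _ fun i => (hf.eval).const_mul r

lemma meas_add {n : ℕ} {mΩ' : MeasurableSpace Ω} {f g : Ω → Fin n → ℝ} (hf : Measurable f)
    (hg : Measurable g) : Measurable fun ω i => f ω i + g ω i :=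
  measurable_pi_lambda _ fun i => (hf.eval).add (hg.eval)

lemma IsPolicy.smul' {mΩ : MeasurableSpace Ω} {P : Measure Ω} {m n : ℕ}
    {F : ℕ → MeasurableSpace Ω} {a : ℕ → Ω → Fin n → ℝ} (ha : IsPolicy P m n F a) (r : ℝ) :
    IsPolicy P m n F (fun t ω i => r * a t ω i) := by
  intro t ht
  obtain ⟨hmeas, C, hC⟩ := ha t ht
  refine ⟨meas_smul hmeas r, |r| * C, ?_⟩
  filter_upwards [hC] with ω hω i
  rw [abs_mul]
  exact mul_le_mul_of_nonneg_left (hω i) (abs_nonneg r)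

lemma IsPolicy.add' {mΩ : MeasurableSpace Ω} {P : Measure Ω} {m n : ℕ}
    {F : ℕ → MeasurableSpace Ω} {a b : ℕ → Ω → Fin n → ℝ}
    (ha : IsPolicy P m n F a) (hb : IsPolicy P m n F b) :
    IsPolicy P m n F (fun t ω i => a t ω i + b t ω i) := by
  intro t ht
  obtain ⟨hameas, C, hC⟩ := ha t ht
  obtain ⟨hbmeas, D, hD⟩ := hb t ht
  refine ⟨meas_add hameas hbmeas, C + D, ?_⟩
  filter_upwards [hC, hD] with ω hω hω' i
  exact (abs_add_le _ _).trans (add_le_add (hω i) (hω' i))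

lemma propGain_measurable {mΩ : MeasurableSpace Ω} {m n : ℕ}
    {Hmid HT γp γm a : ℕ → Ω → Fin n → ℝ}
    (hHmid : ∀ t < m, Measurable (Hmid t)) (hHT : ∀ t < m, Measurable (HT t))
    (hγp : ∀ t < m, Measurable (γp t)) (hγm : ∀ t < m, Measurable (γm t))
    (ha : ∀ t < m, Measurable (a t)) :
    Measurable (propGain m n Hmid HT γp γm a) := by
  unfold propGain
  refine Finset.measurable_sum _ fun t ht => ?_
  have ht' := Finset.mem_range.mp ht
  refine Measurable.sub ?_ ?_
  · exact Finset.measurable_sum _ fun i _ =>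
      ((ha t ht').eval).mul (((hHT t ht').eval).sub ((hHmid t ht').eval))
  · refine Finset.measurable_sum _ fun i _ => Measurable.add ?_ ?_
    · exact ((hγp t ht').eval).mul (((ha t ht').eval).max measurable_const)
    · exact ((hγm t ht').eval).mul ((((ha t ht').eval).neg).max measurable_const)

/-- Let `Q*` have density `exp(-G(a°))/E_P[exp(-G(a°))]` with `a°` the
optimal statistical arbitrage policy. Then the Deep Hedging values satisfy
`g*_λ(Z) ≤ g_λ(Z) - g_λ`, with equality when the spreads vanish. -/
theorem stmt_13
    {mΩ : MeasurableSpace Ω} (P : Measure Ω) [IsProbabilityMeasure P]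
    (m n : ℕ) (F : ℕ → MeasurableSpace Ω) (hF_mono : Monotone F) (hF_le : ∀ t, F t ≤ mΩ)
    (Hmid HT : ℕ → Ω → Fin n → ℝ)
    (hHmid_meas : ∀ t < m, Measurable[F t] (Hmid t))
    (hHT_meas : ∀ t < m, Measurable[F m] (HT t))
    (hHmid_bdd : ∀ t < m, ∃ C : ℝ, ∀ᵐ ω ∂P, ∀ i, |Hmid t ω i| ≤ C)
    (hHT_bdd : ∀ t < m, ∃ C : ℝ, ∀ᵐ ω ∂P, ∀ i, |HT t ω i| ≤ C)
    (γp γm : ℕ → Ω → Fin n → ℝ)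
    (hγp_meas : ∀ t < m, Measurable[F t] (γp t)) (hγm_meas : ∀ t < m, Measurable[F t] (γm t))
    (hγp_nonneg : ∀ t ω i, 0 ≤ γp t ω i) (hγm_nonneg : ∀ t ω i, 0 ≤ γm t ω i)
    (l : ℝ) (hl : 0 < l)
    (acirc : ℕ → Ω → Fin n → ℝ) (hacirc : IsPolicy P m n F acirc)
    (hmin : ∀ a, IsPolicy P m n F a →
      (∫⁻ ω, ENNReal.ofReal (Real.exp (-propGain m n Hmid HT γp γm acirc ω)) ∂P) ≤
        ∫⁻ ω, ENNReal.ofReal (Real.exp (-propGain m n Hmid HT γp γm a ω)) ∂P)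
    (hZpos : 0 < ∫⁻ ω, ENNReal.ofReal (Real.exp (-propGain m n Hmid HT γp γm acirc ω)) ∂P)
    (hZfin : (∫⁻ ω, ENNReal.ofReal (Real.exp (-propGain m n Hmid HT γp γm acirc ω)) ∂P) ≠ ∞)
    (Z : Ω → ℝ) (hZmeas : Measurable[F m] Z) (hZbdd : ∃ C : ℝ, ∀ ω, |Z ω| ≤ C) :
    let Qstar : Measure Ω := P.withDensity (fun ω =>
      ENNReal.ofReal (Real.exp (-propGain m n Hmid HT γp γm acirc ω)) /
        ∫⁻ ω', ENNReal.ofReal (Real.exp (-propGain m n Hmid HT γp γm acirc ω')) ∂P)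
    let gP : (Ω → ℝ) → EReal := fun W =>
      ⨆ a : {a : ℕ → Ω → Fin n → ℝ // IsPolicy P m n F a},
        entU P l (fun ω => W ω + propGain m n Hmid HT γp γm a.1 ω)
    let gQ : (Ω → ℝ) → EReal := fun W =>
      ⨆ a : {a : ℕ → Ω → Fin n → ℝ // IsPolicy P m n F a},
        entU Qstar l (fun ω => W ω + propGain m n Hmid HT γp γm a.1 ω)
    gQ Z ≤ gP Z - gP (fun _ => 0) ∧
      ((∀ t < m, ∀ ω i, γp t ω i = 0 ∧ γm t ω i = 0) → gQ Z = gP Z - gP (fun _ => 0)) := by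
  intro Qstar gP gQ
  have hGmeas : ∀ a : ℕ → Ω → Fin n → ℝ, IsPolicy P m n F a →
      Measurable (propGain m n Hmid HT γp γm a) := fun a ha =>
    propGain_measurable (fun t ht => (hHmid_meas t ht).mono (hF_le t) le_rfl)
      (fun t ht => (hHT_meas t ht).mono (hF_le m) le_rfl)
      (fun t ht => (hγp_meas t ht).mono (hF_le t) le_rfl)
      (fun t ht => (hγm_meas t ht).mono (hF_le t) le_rfl)
      (fun t ht => ((ha t ht).1).mono (hF_le t) le_rfl)
  have hρ : Measurable fun ω =>
      ENNReal.ofReal (Real.exp (-propGain m n Hmid HT γp γm acirc ω)) :=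
    (((hGmeas acirc hacirc).neg).exp).ennreal_ofReal
  have hZ' : Measurable Z := hZmeas.mono (hF_le m) le_rfl
  set k0 : ℝ := (ENNReal.log
    (∫⁻ ω, ENNReal.ofReal (Real.exp (-propGain m n Hmid HT γp γm acirc ω)) ∂P)).toReal with hk0def
  have hk0 : ENNReal.log
      (∫⁻ ω, ENNReal.ofReal (Real.exp (-propGain m n Hmid HT γp γm acirc ω)) ∂P)
      = ((k0 : ℝ) : EReal) := by
    rw [hk0def]
    refine (EReal.coe_toReal ?_ ?_).symm
    · simp only [ne_eq, ENNReal.log_eq_top_iff]; exact hZfin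
    · simp only [ne_eq, ENNReal.log_eq_bot_iff]; exact hZpos.ne'
  -- Key identity: change of measure for the entropic utility
  have key : ∀ a : ℕ → Ω → Fin n → ℝ, IsPolicy P m n F a →
      entU Qstar l (fun ω => Z ω + propGain m n Hmid HT γp γm a ω)
        = entU P l (fun ω => Z ω + propGain m n Hmid HT γp γm a ω
            + 1 / l * propGain m n Hmid HT γp γm acirc ω) + ((k0 * (1 / l) : ℝ) : EReal) := by
    intro a ha
    have hX : Measurable fun ω =>
        ENNReal.ofReal (Real.exp (-l * (Z ω + propGain m n Hmid HT γp γm a ω))) :=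
      (((hZ'.add (hGmeas a ha)).const_mul (-l)).exp).ennreal_ofReal
    have hY : Measurable fun ω =>
        ENNReal.ofReal (Real.exp (-l * (Z ω + propGain m n Hmid HT γp γm a ω
          + 1 / l * propGain m n Hmid HT γp γm acirc ω))) :=
      ((((hZ'.add (hGmeas a ha)).add
        ((hGmeas acirc hacirc).const_mul (1 / l))).const_mul (-l)).exp).ennreal_ofReal
    have hdens : Measurable fun ω =>
        ENNReal.ofReal (Real.exp (-propGain m n Hmid HT γp γm acirc ω)) /
          ∫⁻ ω', ENNReal.ofReal (Real.exp (-propGain m n Hmid HT γp γm acirc ω')) ∂P :=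
      hρ.div measurable_const
    have hIQ : (∫⁻ ω, ENNReal.ofReal (Real.exp (-l * (Z ω
          + propGain m n Hmid HT γp γm a ω))) ∂Qstar)
        = (∫⁻ ω', ENNReal.ofReal (Real.exp (-propGain m n Hmid HT γp γm acirc ω')) ∂P)⁻¹ *
          ∫⁻ ω, ENNReal.ofReal (Real.exp (-l * (Z ω + propGain m n Hmid HT γp γm a ω
            + 1 / l * propGain m n Hmid HT γp γm acirc ω))) ∂P := by
      show (∫⁻ ω, ENNReal.ofReal (Real.exp (-l * (Z ω + propGain m n Hmid HT γp γm a ω)))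
          ∂(P.withDensity fun ω =>
            ENNReal.ofReal (Real.exp (-propGain m n Hmid HT γp γm acirc ω)) /
              ∫⁻ ω', ENNReal.ofReal (Real.exp (-propGain m n Hmid HT γp γm acirc ω')) ∂P)) = _
      rw [lintegral_withDensity_eq_lintegral_mul P hdens hX, ← lintegral_const_mul _ hY]
      refine lintegral_congr fun ω => ?_
      simp only [Pi.mul_apply]
      rw [ENNReal.div_eq_inv_mul, mul_assoc]
      congr 1
      rw [← ENNReal.ofReal_mul (le_of_lt (Real.exp_pos _)), ← Real.exp_add]
      congr 1
      field_simp
      ring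
    unfold entU
    rw [hIQ, ENNReal.log_mul_add, ENNReal.log_inv, hk0,
      show -((k0 : ℝ) : EReal) = ((-k0 : ℝ) : EReal) from (EReal.coe_neg k0).symm,
      ereal_neg_coe_add, neg_neg, ereal_coe_add_mul k0 _ (1 / l) (by positivity), add_comm]
  -- Value of the plain Deep Hedging problem at zero payoff
  have hgP0 : gP (fun _ => 0) = ((-(k0 * (1 / l)) : ℝ) : EReal) := by
    apply le_antisymm
    · refine iSup_le fun a => ?_
      have hI : (∫⁻ ω, ENNReal.ofReal (Real.exp (-l * ((fun _ : Ω => (0 : ℝ)) ω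
            + propGain m n Hmid HT γp γm a.1 ω))) ∂P)
          = ∫⁻ ω, ENNReal.ofReal (Real.exp
            (-propGain m n Hmid HT γp γm (fun t ω i => l * a.1 t ω i) ω)) ∂P := by
        refine lintegral_congr fun ω => ?_
        rw [propGain_smul m n Hmid HT γp γm a.1 l hl.le ω]
        norm_num
      show (- ENNReal.log (∫⁻ ω, ENNReal.ofReal (Real.exp (-l * ((fun _ : Ω => (0 : ℝ)) ω
          + propGain m n Hmid HT γp γm a.1 ω))) ∂P)) * ((1 / l : ℝ) : EReal) ≤ _
      rw [hI]
      refine le_trans (mul_le_mul_of_nonneg_right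
        (EReal.neg_le_neg_iff.mpr (ENNReal.log_monotone (hmin _ (a.2.smul' l))))
        (EReal.coe_nonneg.mpr (by positivity))) (le_of_eq ?_)
      rw [hk0, ← EReal.coe_neg, ← EReal.coe_mul]
      congr 1
      ring
    · have hpol : IsPolicy P m n F (fun t ω i => 1 / l * acirc t ω i) := hacirc.smul' (1 / l)
      have hval : entU P l (fun ω => (fun _ : Ω => (0 : ℝ)) ω
          + propGain m n Hmid HT γp γm (fun t ω i => 1 / l * acirc t ω i) ω)
          = ((-(k0 * (1 / l)) : ℝ) : EReal) := by
        unfold entU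
        have hI : (∫⁻ ω, ENNReal.ofReal (Real.exp (-l * ((fun _ : Ω => (0 : ℝ)) ω
              + propGain m n Hmid HT γp γm (fun t ω i => 1 / l * acirc t ω i) ω))) ∂P)
            = ∫⁻ ω, ENNReal.ofReal (Real.exp (-propGain m n Hmid HT γp γm acirc ω)) ∂P := by
          refine lintegral_congr fun ω => ?_
          rw [propGain_smul m n Hmid HT γp γm acirc (1 / l) (by positivity) ω]
          congr 1
          field_simp
          ring
        rw [hI, hk0, ← EReal.coe_neg, ← EReal.coe_mul]
        congr 1
        ring
      exact hval.symm.le.trans (le_iSup (fun (a : {a : ℕ → Ω → Fin n → ℝ // IsPolicy P m n F a})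
        => entU P l fun ω => (fun _ : Ω => (0 : ℝ)) ω + propGain m n Hmid HT γp γm a.1 ω)
        ⟨_, hpol⟩)
  -- The general inequality
  have part1 : gQ Z ≤ gP Z + ((k0 * (1 / l) : ℝ) : EReal) := by
    refine iSup_le fun a => ?_
    rw [key a.1 a.2]
    refine add_le_add ?_ le_rfl
    have hpolb : IsPolicy P m n F (fun t ω i => a.1 t ω i + 1 / l * acirc t ω i) :=
      a.2.add' (hacirc.smul' (1 / l))
    refine le_trans (entU_mono P l hl (Filter.Eventually.of_forall fun ω => ?_))
      (le_iSup (fun (b : {a : ℕ → Ω → Fin n → ℝ // IsPolicy P m n F a})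
        => entU P l fun ω => Z ω + propGain m n Hmid HT γp γm b.1 ω) ⟨_, hpolb⟩)
    have h1 : 1 / l * propGain m n Hmid HT γp γm acirc ω
        = propGain m n Hmid HT γp γm (fun t ω i => 1 / l * acirc t ω i) ω :=
      (propGain_smul m n Hmid HT γp γm acirc (1 / l) (by positivity) ω).symm
    have h2 := propGain_superadd m n Hmid HT γp γm hγp_nonneg hγm_nonneg a.1
      (fun t ω i => 1 / l * acirc t ω i) ω
    rw [h1]
    linarith
  constructor
  · rw [hgP0, sub_eq_add_neg, EReal.coe_neg, neg_neg]
    exact part1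
  · intro h0
    rw [hgP0, sub_eq_add_neg, EReal.coe_neg, neg_neg]
    refine le_antisymm part1 ?_
    have part2 : gP Z ≤ gQ Z + ((-(k0 * (1 / l)) : ℝ) : EReal) := by
      refine iSup_le fun b => ?_
      have hpa : IsPolicy P m n F (fun t ω i => b.1 t ω i + -(1 / l) * acirc t ω i) :=
        b.2.add' (hacirc.smul' (-(1 / l)))
      have heq := key _ hpa
      have hfun : (fun ω => Z ω + propGain m n Hmid HT γp γm
            (fun t ω i => b.1 t ω i + -(1 / l) * acirc t ω i) ω
            + 1 / l * propGain m n Hmid HT γp γm acirc ω)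
          = fun ω => Z ω + propGain m n Hmid HT γp γm b.1 ω := by
        funext ω
        have h1 : 1 / l * propGain m n Hmid HT γp γm acirc ω
            = propGain m n Hmid HT γp γm (fun t ω i => 1 / l * acirc t ω i) ω :=
          (propGain_smul m n Hmid HT γp γm acirc (1 / l) (by positivity) ω).symm
        have h2 := propGain_add_zero_cost m n Hmid HT γp γm h0
          (fun t ω i => b.1 t ω i + -(1 / l) * acirc t ω i)
          (fun t ω i => 1 / l * acirc t ω i) ω
        have h3 : (fun t ω i => (b.1 t ω i + -(1 / l) * acirc t ω i) + 1 / l * acirc t ω i)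
            = b.1 := by funext t ω i; ring
        rw [h3] at h2
        rw [h1]
        linarith
      rw [hfun] at heq
      have hswap : entU P l (fun ω => Z ω + propGain m n Hmid HT γp γm b.1 ω)
          = entU Qstar l (fun ω => Z ω + propGain m n Hmid HT γp γm
              (fun t ω i => b.1 t ω i + -(1 / l) * acirc t ω i) ω)
            + ((-(k0 * (1 / l)) : ℝ) : EReal) := by
        rw [heq, add_assoc, ← EReal.coe_add]
        simp
      rw [hswap]
      exact add_le_add (le_iSup (fun (a : {a : ℕ → Ω → Fin n → ℝ // IsPolicy P m n F a})
        => entU Qstar l fun ω => Z ω + propGain m n Hmid HT γp γm a.1 ω) ⟨_, hpa⟩) le_rfl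
    calc gP Z + ((k0 * (1 / l) : ℝ) : EReal)
        ≤ (gQ Z + ((-(k0 * (1 / l)) : ℝ) : EReal)) + ((k0 * (1 / l) : ℝ) : EReal) :=
          add_le_add part2 le_rfl
      _ = gQ Z := by rw [add_assoc, ← EReal.coe_add]; simp
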